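/- Let H be a locally compact Hausdorff space and K ∈ Sh(H × H) a sheaf kernel with associated integral transform Φ_K(F) = p₂_!(K ⊗ p₁^*F). Then the trace of Φ_K (computed with respect to the self-duality of Sh(H)) is naturally isomorphic to the compactly supported sections of the restriction of K to the diagonal: Tr(Φ_K) ≅ Γ_c(H, Δ^*K). In particular Tr(id_{Sh(H)}) ≅ Γ_c(H, 1_H). -/
import Mathlib

/-!
STATEMENT 12: For `H` locally compact Hausdorff and a kernel
`K ∈ Sh(H × H)` with integral transform `Φ_K(F) = p₂_!(K ⊗ p₁^*F)`, the trace
of `Φ_K` with respect to the self-duality of `Sh(H)` is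
`Tr(Φ_K) ≅ Γ_c(H, Δ^*K)`; in particular `Tr(id) ≅ Γ_c(H, 1_H)`.

We work in an ambient symmetric monoidal (1-truncated) category `M`, standing
for the category of `k`-linear presentable stable categories with the Lurie
tensor product.  `X` stands for `Sh(H)`; its self-duality is given by
`η = Δ_! a^* : 𝟙 ⟶ X ⊗ X` and `ε = a_! Δ^* : X ⊗ X ⟶ 𝟙`, which satisfy the
triangle identities and are symmetric (`β ≫ ε = ε`, since `Δ^* v^* = Δ^*`).
A kernel `K ∈ Sh(H × H)` is a morphism `K : 𝟙 ⟶ X ⊗ X` (a `k`-linear functor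
`k → Sh(H × H)`), its integral transform `Φ_K : X ⟶ X` is the composite
`X ≅ 𝟙 ⊗ X ⟶ (X ⊗ X) ⊗ X ⟶ X ⊗ (X ⊗ X) ⟶ X ⊗ 𝟙 ≅ X` using `ε`, the trace of
`f : X ⟶ X` is `η ≫ (X ◁ f) ≫ β ≫ ε : 𝟙 ⟶ 𝟙`, and `Γ_c(H, Δ^*K)` is
`K ≫ ε = a_! Δ^* K : 𝟙 ⟶ 𝟙`, an object of `k`.
-/

open CategoryTheory MonoidalCategory

/-- Auxiliary computation: the trace-type composite with `Φ_K` whiskered on the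
right equals `K ≫ ε`, using only the triangle identity `tri1`. -/
theorem stmt12_aux {M : Type*} [Category M] [MonoidalCategory M] [SymmetricCategory M]
    (X : M)
    (η : 𝟙_ M ⟶ X ⊗ X) (ε : X ⊗ X ⟶ 𝟙_ M)
    (tri1 : (ρ_ X).inv ≫ (X ◁ η) ≫ (α_ X X X).inv ≫ (ε ▷ X) ≫ (λ_ X).hom = 𝟙 X)
    (K : 𝟙_ M ⟶ X ⊗ X) :
    η ≫ (((λ_ X).inv ≫ (K ▷ X) ≫ (α_ X X X).hom ≫ (X ◁ ε) ≫ (ρ_ X).hom) ▷ X) ≫ ε = K ≫ ε := by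
  have hW : (ρ_ (X ⊗ X)).inv ≫ ((X ⊗ X) ◁ η) ≫ (α_ (X ⊗ X) X X).inv ≫
      ((α_ X X X).hom ▷ X) ≫ ((X ◁ ε) ▷ X) ≫ ((ρ_ X).hom ▷ X) ≫ ε = ε := by
    have : (ρ_ (X ⊗ X)).inv ≫ ((X ⊗ X) ◁ η) ≫ (α_ (X ⊗ X) X X).inv ≫
        ((α_ X X X).hom ▷ X) ≫ ((X ◁ ε) ▷ X) ≫ ((ρ_ X).hom ▷ X) ≫ ε =
        (X ◁ ((ρ_ X).inv ≫ (X ◁ η) ≫ (α_ X X X).inv ≫ (ε ▷ X) ≫ (λ_ X).hom)) ≫ ε := by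
      monoidal
    rw [this, tri1, MonoidalCategory.whiskerLeft_id, Category.id_comp]
  calc η ≫ (((λ_ X).inv ≫ (K ▷ X) ≫ (α_ X X X).hom ≫ (X ◁ ε) ≫ (ρ_ X).hom) ▷ X) ≫ ε
      = (λ_ (𝟙_ M)).inv ≫ (𝟙_ M ◁ η) ≫ (K ▷ (X ⊗ X)) ≫ (α_ (X ⊗ X) X X).inv ≫
        ((α_ X X X).hom ▷ X) ≫ ((X ◁ ε) ▷ X) ≫ ((ρ_ X).hom ▷ X) ≫ ε := by
        monoidal
    _ = (λ_ (𝟙_ M)).inv ≫ (K ▷ 𝟙_ M) ≫ ((X ⊗ X) ◁ η) ≫ (α_ (X ⊗ X) X X).inv ≫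
        ((α_ X X X).hom ▷ X) ≫ ((X ◁ ε) ▷ X) ≫ ((ρ_ X).hom ▷ X) ≫ ε := by
        rw [← whisker_exchange_assoc]
    _ = K ≫ (ρ_ (X ⊗ X)).inv ≫ ((X ⊗ X) ◁ η) ≫ (α_ (X ⊗ X) X X).inv ≫
        ((α_ X X X).hom ▷ X) ≫ ((X ◁ ε) ▷ X) ≫ ((ρ_ X).hom ▷ X) ≫ ε := by
        rw [unitors_inv_equal, ← MonoidalCategory.rightUnitor_inv_naturality_assoc]
    _ = K ≫ ε := by rw [hW]

theorem stmt12 {M : Type*} [Category M] [MonoidalCategory M] [SymmetricCategory M]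
    (X : M)
    (η : 𝟙_ M ⟶ X ⊗ X) (ε : X ⊗ X ⟶ 𝟙_ M)
    (tri1 : (ρ_ X).inv ≫ (X ◁ η) ≫ (α_ X X X).inv ≫ (ε ▷ X) ≫ (λ_ X).hom = 𝟙 X)
    (tri2 : (λ_ X).inv ≫ (η ▷ X) ≫ (α_ X X X).hom ≫ (X ◁ ε) ≫ (ρ_ X).hom = 𝟙 X)
    (hεsymm : (β_ X X).hom ≫ ε = ε) (hηsymm : η ≫ (β_ X X).hom = η)
    (K : 𝟙_ M ⟶ X ⊗ X)
    (ΦK : X ⟶ X)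
    (hΦ : ΦK = (λ_ X).inv ≫ (K ▷ X) ≫ (α_ X X X).hom ≫ (X ◁ ε) ≫ (ρ_ X).hom) :
    -- Tr(Φ_K) = Γ_c(H, Δ^*K) = a_! Δ^* K
    η ≫ (X ◁ ΦK) ≫ (β_ X X).hom ≫ ε = K ≫ ε ∧
    -- in particular Tr(1_{Sh(H)}) = Γ_c(H, 1_H) = a_! Δ^* Δ_! a^* = ε ∘ η
    η ≫ (X ◁ (𝟙 X)) ≫ (β_ X X).hom ≫ ε = η ≫ ε := by
  constructor
  · rw [BraidedCategory.braiding_naturality_right_assoc, ← Category.assoc, hηsymm, hΦ]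
    exact stmt12_aux X η ε tri1 K
  · rw [MonoidalCategory.whiskerLeft_id, Category.id_comp, ← Category.assoc, hηsymm]
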